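/- arXiv:2507.07749 — 2 statements merged into one kernel-verified Lean document; each statement's English description precedes it below -/
import Mathlib

section
/- Let x : [0,ηε] → ℝ^{n_x}, u : [0,ηε] → ℝ^{n_u} with u(0) = u⁰, and suppose: (i) |√h(t,x̂) − √h(t,x̃)| ≤ L_h‖x̂ − x̃‖ for all x̂, x̃ and t; (ii) √(h(t,ℓ(v))) ≤ α₁₂‖v − u*(t)‖ for all v, t; (iii) sup_{t₁,t₂≥0}‖u*(t₁) − u*(t₂)‖ ≤ ν; (iv) σ₁₁‖x(t) − ℓ(u(t))‖ ≤ √(V(x(t),u(t))); (v) ‖u̇(s)‖ ≤ (c_u/(η√ε))·√(h(s,x(s))) for all s. Then for all t ∈ [0,ηε], √(h(t,x(t))) ≤ α·(‖u⁰ − u*(0)‖ + ν) + (L_h/σ₁₁)·√(V(x(t),u(t))) + (α·L_h·c_u/(σ₁₁·η√ε))·∫₀ᵗ √(V(x(s),u(s))) ds, where α := α₁₂·e^{α₁₂·c_u·√ε}. -/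
open Real MeasureTheory Set


/-- Integral-form Grönwall lemma (no measurability of the original function needed):
if a continuous `W` satisfies `W t ≤ ∫₀ᵗ (φ s + K W s)` on `[0, T0]` with `K ≥ 0` and `φ`
continuous, then `W t ≤ ∫₀ᵗ exp (K (t - s)) φ s`. -/
lemma gronwall_integral_aux (T0 K : ℝ) (hK : 0 ≤ K) (φ W : ℝ → ℝ)
    (hφ : ContinuousOn φ (Set.Icc 0 T0)) (hW : ContinuousOn W (Set.Icc 0 T0))
    (h1 : ∀ t ∈ Set.Icc (0:ℝ) T0, W t ≤ ∫ s in (0:ℝ)..t, (φ s + K * W s)) :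
    ∀ t ∈ Set.Icc (0:ℝ) T0, W t ≤ ∫ s in (0:ℝ)..t, Real.exp (K * (t - s)) * φ s := by
  intro t ht
  obtain ⟨ht0, htT⟩ := ht
  have hT0 : (0:ℝ) ≤ T0 := ht0.trans htT
  have huIcc : Set.uIcc (0:ℝ) T0 = Set.Icc 0 T0 := Set.uIcc_of_le hT0
  have huIcct : Set.uIcc (0:ℝ) t = Set.Icc 0 t := Set.uIcc_of_le ht0
  have hsub : Set.Icc (0:ℝ) t ⊆ Set.Icc 0 T0 := Set.Icc_subset_Icc le_rfl htT
  set g : ℝ → ℝ := fun s => φ s + K * W s with hgdef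
  have hgcont : ContinuousOn g (Set.Icc 0 T0) := hφ.add (continuousOn_const.mul hW)
  have hgint : IntervalIntegrable g volume 0 T0 :=
    (huIcc.symm ▸ hgcont).intervalIntegrable
  set T : ℝ → ℝ := fun r => ∫ s in (0:ℝ)..r, g s with hTdef
  have hTcont : ContinuousOn T (Set.Icc 0 T0) :=
    huIcc ▸ intervalIntegral.continuousOn_primitive_interval' hgint Set.left_mem_uIcc
  have hWT : ∀ r ∈ Set.Icc (0:ℝ) T0, W r ≤ T r := h1
  set ψ : ℝ → ℝ := fun s => Real.exp (-(K * s)) * φ s with hψdef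
  have hψcont : ContinuousOn ψ (Set.Icc 0 T0) :=
    (Real.continuous_exp.comp (continuous_const.mul continuous_id).neg).continuousOn.mul hφ
  have hψint : IntervalIntegrable ψ volume 0 T0 :=
    (huIcc.symm ▸ hψcont).intervalIntegrable
  set F : ℝ → ℝ := fun r => Real.exp (-(K * r)) * T r - ∫ s in (0:ℝ)..r, ψ s with hFdef
  set F' : ℝ → ℝ := fun r => Real.exp (-(K * r)) * (K * (W r - T r)) with hF'def
  have hFcont : ContinuousOn F (Set.Icc 0 t) := by
    refine ContinuousOn.sub ?_ ?_
    · exact ((Real.continuous_exp.comp (continuous_const.mul continuous_id).neg).continuousOn.mul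
        hTcont).mono hsub
    · exact ((huIcc ▸ intervalIntegral.continuousOn_primitive_interval' hψint
        Set.left_mem_uIcc).mono hsub)
  have hopen : ContinuousOn g (Set.Ioo 0 T0) := hgcont.mono Set.Ioo_subset_Icc_self
  have hopenψ : ContinuousOn ψ (Set.Ioo 0 T0) := hψcont.mono Set.Ioo_subset_Icc_self
  have hFderiv : ∀ r ∈ Set.Ioo (0:ℝ) t, HasDerivWithinAt F (F' r) (Set.Ioi r) r := by
    intro r hr
    have hrT : r ∈ Set.Ioo (0:ℝ) T0 := ⟨hr.1, lt_of_lt_of_le hr.2 htT⟩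
    have hrmem : Set.Icc (0:ℝ) T0 ∈ nhds r := Icc_mem_nhds hrT.1 hrT.2
    have hgat : ContinuousAt g r := hgcont.continuousAt hrmem
    have hψat : ContinuousAt ψ r := hψcont.continuousAt hrmem
    have hsubr : Set.uIcc (0:ℝ) r ⊆ Set.uIcc 0 T0 := by
      rw [huIcc, Set.uIcc_of_le (le_of_lt hrT.1)]
      exact Set.Icc_subset_Icc le_rfl hrT.2.le
    have hgintr : IntervalIntegrable g volume 0 r := hgint.mono_set hsubr
    have hψintr : IntervalIntegrable ψ volume 0 r := hψint.mono_set hsubr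
    have hgmeas : StronglyMeasurableAtFilter g (nhds r) volume :=
      ContinuousOn.stronglyMeasurableAtFilter isOpen_Ioo hopen r hrT
    have hψmeas : StronglyMeasurableAtFilter ψ (nhds r) volume :=
      ContinuousOn.stronglyMeasurableAtFilter isOpen_Ioo hopenψ r hrT
    have hTd : HasDerivAt T (g r) r :=
      intervalIntegral.integral_hasDerivAt_right hgintr hgmeas hgat
    have hPd : HasDerivAt (fun z => ∫ s in (0:ℝ)..z, ψ s) (ψ r) r :=
      intervalIntegral.integral_hasDerivAt_right hψintr hψmeas hψat
    have hed : HasDerivAt (fun z : ℝ => Real.exp (-(K * z))) (-K * Real.exp (-(K * r))) r := by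
      have h1 : HasDerivAt (fun z : ℝ => -(K * z)) (-K) r := by
        simpa using ((hasDerivAt_id r).const_mul K).fun_neg
      simpa [mul_comm] using h1.exp
    have : HasDerivAt F ((-K * Real.exp (-(K * r))) * T r + Real.exp (-(K * r)) * g r - ψ r) r :=
      (hed.mul hTd).sub hPd
    have heq : (-K * Real.exp (-(K * r))) * T r + Real.exp (-(K * r)) * g r - ψ r = F' r := by
      simp only [hgdef, hψdef, hF'def]; ring
    exact (heq ▸ this).hasDerivWithinAt
  have hF'cont : ContinuousOn F' (Set.Icc 0 t) := by
    refine (((Real.continuous_exp.comp (continuous_const.mul continuous_id).neg).continuousOn.mul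
      (continuousOn_const.mul ((hW.mono hsub).sub (hTcont.mono hsub)))))
  have hF'int : IntervalIntegrable F' volume 0 t :=
    (huIcct.symm ▸ hF'cont).intervalIntegrable
  have hFTC : ∫ y in (0:ℝ)..t, F' y = F t - F 0 :=
    intervalIntegral.integral_eq_sub_of_hasDeriv_right_of_le ht0 hFcont hFderiv hF'int
  have hF0 : F 0 = 0 := by simp [hFdef, hTdef]
  have hF'nonpos : ∀ s ∈ Set.Icc (0:ℝ) t, F' s ≤ 0 := by
    intro s hs
    have hWs := hWT s (hsub hs)
    have : K * (W s - T s) ≤ 0 := mul_nonpos_of_nonneg_of_nonpos hK (by linarith)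
    exact mul_nonpos_of_nonneg_of_nonpos (Real.exp_pos _).le this
  have hintle : (∫ y in (0:ℝ)..t, F' y) ≤ 0 := by
    have := intervalIntegral.integral_mono_on (μ := volume) ht0 hF'int
      intervalIntegrable_const (g := fun _ => (0:ℝ)) hF'nonpos
    simpa using this
  have hFt : F t ≤ 0 := by rw [hFTC, hF0, sub_zero] at hintle; exact hintle
  -- conclude
  have hTt : T t ≤ Real.exp (K * t) * ∫ s in (0:ℝ)..t, ψ s := by
    have h2 : Real.exp (-(K * t)) * T t ≤ ∫ s in (0:ℝ)..t, ψ s := by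
      have := hFt; simp only [hFdef] at this; linarith
    have h3 := mul_le_mul_of_nonneg_left h2 (Real.exp_pos (K * t)).le
    calc T t = Real.exp (K * t) * (Real.exp (-(K * t)) * T t) := by
            rw [← mul_assoc, ← Real.exp_add]; simp
      _ ≤ Real.exp (K * t) * ∫ s in (0:ℝ)..t, ψ s := h3
  have hfin : Real.exp (K * t) * (∫ s in (0:ℝ)..t, ψ s)
      = ∫ s in (0:ℝ)..t, Real.exp (K * (t - s)) * φ s := by
    rw [← intervalIntegral.integral_const_mul]
    refine intervalIntegral.integral_congr fun s _ => ?_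
    simp only [hψdef]
    rw [← mul_assoc, ← Real.exp_add]
    ring_nf
  calc W t ≤ T t := hWT t ⟨ht0, htT⟩
    _ ≤ Real.exp (K * t) * ∫ s in (0:ℝ)..t, ψ s := hTt
    _ = _ := hfin

set_option maxHeartbeats 1000000 in
/-- Grönwall-type estimate for `√(h(t,x(t)))` along solutions:
under the Lipschitz bound (i), the steady-state output bound (ii), the oscillation
bound (iii), the Lyapunov lower bound (iv) and the controller speed bound (v),
`√(h(t,x(t))) ≤ α(‖u⁰−u*(0)‖+ν) + (L_h/σ₁₁)√V(x(t),u(t))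
  + (αL_h c_u/(σ₁₁η√ε))∫₀ᵗ √V(x(s),u(s)) ds`, with `α = α₁₂ e^{α₁₂ c_u √ε}`
and `c_u = γ√(2π n_u (n_u+1))`. -/
theorem sqrt_h_along_solution_bound
    (nx nu : ℕ) (γ η ε L_h α₁₂ σ₁₁ ν c_u α : ℝ)
    (hγ : 0 < γ) (hη : 0 < η) (hε : 0 < ε) (hLh : 0 < L_h)
    (hα₁₂ : 0 < α₁₂) (hσ₁₁ : 0 < σ₁₁) (hν : 0 ≤ ν)
    (hcu : c_u = γ * Real.sqrt (2 * π * nu * (nu + 1)))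
    (hα : α = α₁₂ * Real.exp (α₁₂ * c_u * Real.sqrt ε))
    (h : ℝ → EuclideanSpace ℝ (Fin nx) → ℝ)
    (ℓ : EuclideanSpace ℝ (Fin nu) → EuclideanSpace ℝ (Fin nx))
    (ustar : ℝ → EuclideanSpace ℝ (Fin nu))
    (V : EuclideanSpace ℝ (Fin nx) → EuclideanSpace ℝ (Fin nu) → ℝ)
    (hVcont : Continuous (fun p : EuclideanSpace ℝ (Fin nx) × EuclideanSpace ℝ (Fin nu) => V p.1 p.2))
    (x : ℝ → EuclideanSpace ℝ (Fin nx))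
    (u u' : ℝ → EuclideanSpace ℝ (Fin nu))
    (u0 : EuclideanSpace ℝ (Fin nu))
    (hxcont : ContinuousOn x (Set.Icc 0 (η * ε)))
    (hu0 : u 0 = u0)
    (hint : IntervalIntegrable u' MeasureTheory.volume 0 (η * ε))
    (hAC : ∀ t ∈ Set.Icc (0:ℝ) (η * ε), u t = u0 + ∫ s in (0:ℝ)..t, u' s)
    -- (i) Lipschitz continuity of √h in x
    (hLip : ∀ (t : ℝ), 0 ≤ t → ∀ xa xb : EuclideanSpace ℝ (Fin nx),
      |Real.sqrt (h t xa) - Real.sqrt (h t xb)| ≤ L_h * ‖xa - xb‖)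
    -- (ii) upper output bound at the steady state
    (hbound : ∀ (v : EuclideanSpace ℝ (Fin nu)) (t : ℝ), 0 ≤ t →
      Real.sqrt (h t (ℓ v)) ≤ α₁₂ * ‖v - ustar t‖)
    -- (iii) oscillation bound of the reference input
    (hosc : ∀ t₁ t₂ : ℝ, 0 ≤ t₁ → 0 ≤ t₂ → ‖ustar t₁ - ustar t₂‖ ≤ ν)
    -- (iv) Lyapunov lower bound
    (hVlb : ∀ t ∈ Set.Icc (0:ℝ) (η * ε),
      σ₁₁ * ‖x t - ℓ (u t)‖ ≤ Real.sqrt (V (x t) (u t)))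
    -- (v) controller speed bound
    (hu' : ∀ s ∈ Set.Icc (0:ℝ) (η * ε),
      ‖u' s‖ ≤ c_u / (η * Real.sqrt ε) * Real.sqrt (h s (x s))) :
    ∀ t ∈ Set.Icc (0:ℝ) (η * ε),
      Real.sqrt (h t (x t)) ≤ α * (‖u0 - ustar 0‖ + ν)
        + (L_h / σ₁₁) * Real.sqrt (V (x t) (u t))
        + (α * L_h * c_u / (σ₁₁ * η * Real.sqrt ε)) *
            ∫ s in (0:ℝ)..t, Real.sqrt (V (x s) (u s)) := by
  intro t ht
  obtain ⟨ht0, htT⟩ := ht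
  set T0 : ℝ := η * ε with hT0def
  have hT0 : 0 < T0 := mul_pos hη hε
  have hsε : 0 < Real.sqrt ε := Real.sqrt_pos.2 hε
  have hcu0 : 0 ≤ c_u := by rw [hcu]; exact mul_nonneg hγ.le (Real.sqrt_nonneg _)
  set C : ℝ := c_u / (η * Real.sqrt ε) with hCdef
  have hC : 0 ≤ C := div_nonneg hcu0 (mul_nonneg hη.le hsε.le)
  set K : ℝ := C * α₁₂ with hKdef
  have hK : 0 ≤ K := mul_nonneg hC hα₁₂.le
  set A' : ℝ := ‖u0 - ustar 0‖ + ν with hA'def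
  have hA' : 0 ≤ A' := add_nonneg (norm_nonneg _) hν
  set A : ℝ := α₁₂ * A' with hAdef
  have hA : 0 ≤ A := mul_nonneg hα₁₂.le hA'
  set B : ℝ → ℝ := fun s => (L_h / σ₁₁) * Real.sqrt (V (x s) (u s)) with hBdef
  have hB0 : ∀ s, 0 ≤ B s := fun s =>
    mul_nonneg (div_nonneg hLh.le hσ₁₁.le) (Real.sqrt_nonneg _)
  set W : ℝ → ℝ := fun r => ∫ s in (0:ℝ)..r, ‖u' s‖ with hWdef
  have huIcc : Set.uIcc (0:ℝ) T0 = Set.Icc 0 T0 := Set.uIcc_of_le hT0.le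
  have huIcct : Set.uIcc (0:ℝ) t = Set.Icc 0 t := Set.uIcc_of_le ht0
  have hsubt : Set.Icc (0:ℝ) t ⊆ Set.Icc 0 T0 := Set.Icc_subset_Icc le_rfl htT
  have hsubu : Set.uIcc (0:ℝ) t ⊆ Set.uIcc 0 T0 := by
    rw [huIcc, huIcct]; exact hsubt
  -- continuity of u
  have hucont : ContinuousOn u (Set.Icc 0 T0) := by
    have hp : ContinuousOn (fun r => u0 + ∫ s in (0:ℝ)..r, u' s) (Set.Icc 0 T0) :=
      continuousOn_const.add
        (huIcc ▸ intervalIntegral.continuousOn_primitive_interval' hint Set.left_mem_uIcc)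
    exact hp.congr fun r hr => hAC r hr
  have hBcont : ContinuousOn B (Set.Icc 0 T0) := by
    have hxV : ContinuousOn (fun s => V (x s) (u s)) (Set.Icc 0 T0) :=
      hVcont.comp_continuousOn (hxcont.prodMk hucont)
    exact continuousOn_const.mul (Real.continuous_sqrt.comp_continuousOn hxV)
  have hWcont : ContinuousOn W (Set.Icc 0 T0) :=
    huIcc ▸ intervalIntegral.continuousOn_primitive_interval' hint.norm Set.left_mem_uIcc
  -- Step A : pointwise bound on √h
  have stepA : ∀ r ∈ Set.Icc (0:ℝ) T0,
      Real.sqrt (h r (x r)) ≤ A + B r + α₁₂ * W r := by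
    intro r hr
    obtain ⟨hr0, hrT⟩ := hr
    have e1 : Real.sqrt (h r (x r)) - Real.sqrt (h r (ℓ (u r))) ≤ L_h * ‖x r - ℓ (u r)‖ :=
      (le_abs_self _).trans (hLip r hr0 _ _)
    have e2 : Real.sqrt (h r (ℓ (u r))) ≤ α₁₂ * ‖u r - ustar r‖ := hbound (u r) r hr0
    have e3 : L_h * ‖x r - ℓ (u r)‖ ≤ B r := by
      have := hVlb r ⟨hr0, hrT⟩
      simp only [hBdef]
      rw [div_mul_eq_mul_div, le_div_iff₀ hσ₁₁]
      nlinarith [norm_nonneg (x r - ℓ (u r))]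
    have e4 : ‖u r - ustar r‖ ≤ W r + A' := by
      have hdecomp : u r - ustar r
          = (∫ s in (0:ℝ)..r, u' s) + (u0 - ustar 0) + (ustar 0 - ustar r) := by
        rw [hAC r ⟨hr0, hrT⟩]; abel
      calc ‖u r - ustar r‖
          ≤ ‖(∫ s in (0:ℝ)..r, u' s) + (u0 - ustar 0)‖ + ‖ustar 0 - ustar r‖ := by
            rw [hdecomp]; exact norm_add_le _ _
        _ ≤ ‖∫ s in (0:ℝ)..r, u' s‖ + ‖u0 - ustar 0‖ + ‖ustar 0 - ustar r‖ := by
            have := norm_add_le (∫ s in (0:ℝ)..r, u' s) (u0 - ustar 0)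
            linarith
        _ ≤ W r + ‖u0 - ustar 0‖ + ν := by
            have h5 := intervalIntegral.norm_integral_le_integral_norm (f := u')
              (μ := MeasureTheory.volume) (a := 0) (b := r) hr0
            have h6 := hosc 0 r le_rfl hr0
            rw [hWdef]
            simp only
            linarith
        _ = W r + A' := by rw [hA'def]; ring
    have e5 : α₁₂ * ‖u r - ustar r‖ ≤ α₁₂ * (W r + A') :=
      mul_le_mul_of_nonneg_left e4 hα₁₂.le
    have : Real.sqrt (h r (x r)) ≤ L_h * ‖x r - ℓ (u r)‖ + α₁₂ * ‖u r - ustar r‖ := by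
      linarith
    rw [hAdef]
    linarith
  -- Step B : integral inequality for W
  have hwb : ∀ s ∈ Set.Icc (0:ℝ) T0,
      ‖u' s‖ ≤ (C * (A + B s)) + K * W s := by
    intro s hs
    calc ‖u' s‖ ≤ C * Real.sqrt (h s (x s)) := hu' s hs
      _ ≤ C * (A + B s + α₁₂ * W s) := mul_le_mul_of_nonneg_left (stepA s hs) hC
      _ = (C * (A + B s)) + K * W s := by rw [hKdef]; ring
  set φ : ℝ → ℝ := fun s => C * (A + B s) with hφdef
  have hφcont : ContinuousOn φ (Set.Icc 0 T0) :=
    continuousOn_const.mul (continuousOn_const.add hBcont)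
  have hWT : ∀ r ∈ Set.Icc (0:ℝ) T0, W r ≤ ∫ s in (0:ℝ)..r, (φ s + K * W s) := by
    intro r hr
    obtain ⟨hr0, hrT⟩ := hr
    have hsubr : Set.uIcc (0:ℝ) r ⊆ Set.uIcc 0 T0 := by
      rw [huIcc, Set.uIcc_of_le hr0]
      exact Set.Icc_subset_Icc le_rfl hrT
    have hnint : IntervalIntegrable (fun s => ‖u' s‖) volume 0 r := hint.norm.mono_set hsubr
    have hgint : IntervalIntegrable (fun s => φ s + K * W s) volume 0 r := by
      refine ContinuousOn.intervalIntegrable ?_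
      refine ((hφcont.add (continuousOn_const.mul hWcont)).mono ?_)
      rw [Set.uIcc_of_le hr0]; exact Set.Icc_subset_Icc le_rfl hrT
    exact intervalIntegral.integral_mono_on hr0 hnint hgint fun s hs =>
      hwb s ⟨hs.1, hs.2.trans hrT⟩
  -- Grönwall
  have hgron := gronwall_integral_aux T0 K hK φ W hφcont hWcont hWT t ⟨ht0, htT⟩
  -- split and bound the integral
  have hket : Continuous (fun s : ℝ => Real.exp (K * (t - s))) :=
    Real.continuous_exp.comp (continuous_const.mul (continuous_const.sub continuous_id))
  have hc1 : ContinuousOn (fun s => C * A * Real.exp (K * (t - s))) (Set.uIcc 0 t) :=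
    (continuous_const.mul hket).continuousOn
  have hc2 : ContinuousOn (fun s => Real.exp (K * (t - s)) * (C * B s)) (Set.uIcc 0 t) := by
    rw [huIcct]
    exact hket.continuousOn.mul (continuousOn_const.mul (hBcont.mono hsubt))
  have hi1 : IntervalIntegrable (fun s => C * A * Real.exp (K * (t - s))) volume 0 t :=
    hc1.intervalIntegrable
  have hi2 : IntervalIntegrable (fun s => Real.exp (K * (t - s)) * (C * B s)) volume 0 t :=
    hc2.intervalIntegrable
  have hsplit : (∫ s in (0:ℝ)..t, Real.exp (K * (t - s)) * φ s)
      = (∫ s in (0:ℝ)..t, C * A * Real.exp (K * (t - s)))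
        + ∫ s in (0:ℝ)..t, Real.exp (K * (t - s)) * (C * B s) := by
    rw [← intervalIntegral.integral_add hi1 hi2]
    refine intervalIntegral.integral_congr fun s _ => ?_
    rw [hφdef]; ring
  -- exact value of the constant part
  have hexact : (∫ s in (0:ℝ)..t, K * Real.exp (K * (t - s))) = Real.exp (K * t) - 1 := by
    have hderiv : ∀ s ∈ Set.uIcc (0:ℝ) t,
        HasDerivAt (fun z => -Real.exp (K * (t - z))) (K * Real.exp (K * (t - s))) s := by
      intro s _
      have h1 : HasDerivAt (fun z : ℝ => K * (t - z)) (-K) s := by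
        simpa using (((hasDerivAt_id s).const_sub t).const_mul K)
      have h2 := h1.exp
      have h3 := h2.fun_neg
      exact h3.congr_deriv (by ring)
    have hintc : IntervalIntegrable (fun s => K * Real.exp (K * (t - s))) volume 0 t :=
      Continuous.intervalIntegrable (continuous_const.mul hket) 0 t
    rw [intervalIntegral.integral_eq_sub_of_hasDerivAt hderiv hintc]
    simp only [sub_self, mul_zero, Real.exp_zero, sub_zero]
    ring
  -- bound the B-part
  set E : ℝ := Real.exp (K * T0) with hEdef
  have hEt : ∀ s ∈ Set.Icc (0:ℝ) t, Real.exp (K * (t - s)) ≤ E := by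
    intro s hs
    rw [hEdef]
    exact Real.exp_le_exp.2 (mul_le_mul_of_nonneg_left (by linarith [hs.1, htT]) hK)
  have hi3 : IntervalIntegrable (fun s => E * C * B s) volume 0 t := by
    refine ContinuousOn.intervalIntegrable ?_
    rw [huIcct]
    exact continuousOn_const.mul (hBcont.mono hsubt)
  have hbpart : (∫ s in (0:ℝ)..t, Real.exp (K * (t - s)) * (C * B s))
      ≤ ∫ s in (0:ℝ)..t, E * C * B s := by
    refine intervalIntegral.integral_mono_on ht0 hi2 hi3 fun s hs => ?_
    have := mul_le_mul_of_nonneg_right (hEt s hs) (mul_nonneg hC (hB0 s))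
    calc Real.exp (K * (t - s)) * (C * B s) ≤ E * (C * B s) := this
      _ = E * C * B s := by ring
  -- assemble
  have hWfinal : α₁₂ * W t ≤ A * (Real.exp (K * t) - 1)
      + α₁₂ * E * C * ∫ s in (0:ℝ)..t, B s := by
    have h1 : α₁₂ * W t ≤ α₁₂ * ((∫ s in (0:ℝ)..t, C * A * Real.exp (K * (t - s)))
        + ∫ s in (0:ℝ)..t, Real.exp (K * (t - s)) * (C * B s)) := by
      refine mul_le_mul_of_nonneg_left ?_ hα₁₂.le
      rw [← hsplit]; exact hgron
    have h2 : α₁₂ * (∫ s in (0:ℝ)..t, C * A * Real.exp (K * (t - s)))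
        = A * (Real.exp (K * t) - 1) := by
      rw [← hexact, ← intervalIntegral.integral_const_mul, ← intervalIntegral.integral_const_mul]
      refine intervalIntegral.integral_congr fun s _ => ?_
      rw [hKdef]; ring
    have h3 : α₁₂ * (∫ s in (0:ℝ)..t, Real.exp (K * (t - s)) * (C * B s))
        ≤ α₁₂ * E * C * ∫ s in (0:ℝ)..t, B s := by
      have := mul_le_mul_of_nonneg_left hbpart hα₁₂.le
      calc α₁₂ * (∫ s in (0:ℝ)..t, Real.exp (K * (t - s)) * (C * B s))
          ≤ α₁₂ * ∫ s in (0:ℝ)..t, E * C * B s := this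
        _ = α₁₂ * ((E * C) * ∫ s in (0:ℝ)..t, B s) := by
            rw [intervalIntegral.integral_const_mul]
        _ = α₁₂ * E * C * ∫ s in (0:ℝ)..t, B s := by ring
    linarith [mul_le_mul_of_nonneg_left hbpart hα₁₂.le]
  -- identify constants
  have hKT0 : K * T0 = α₁₂ * c_u * Real.sqrt ε := by
    have hεs : Real.sqrt ε * Real.sqrt ε = ε := Real.mul_self_sqrt hε.le
    have hne : η * Real.sqrt ε ≠ 0 := by positivity
    rw [hKdef, hCdef, hT0def, div_mul_eq_mul_div, div_mul_eq_mul_div, div_eq_iff hne]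
    linear_combination (-(α₁₂ * c_u * η)) * hεs
  have hEval : E = Real.exp (α₁₂ * c_u * Real.sqrt ε) := by rw [hEdef, hKT0]
  have hαE : α = α₁₂ * E := by rw [hα, hEval]
  have hexpKt : Real.exp (K * t) ≤ E := by
    rw [hEdef]
    exact Real.exp_le_exp.2 (mul_le_mul_of_nonneg_left htT hK)
  have hintB : (∫ s in (0:ℝ)..t, B s)
      = (L_h / σ₁₁) * ∫ s in (0:ℝ)..t, Real.sqrt (V (x s) (u s)) := by
    simp only [hBdef]
    rw [← intervalIntegral.integral_const_mul]
  have hcoef : α₁₂ * E * C * (L_h / σ₁₁) = α * L_h * c_u / (σ₁₁ * η * Real.sqrt ε) := by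
    rw [hαE, hCdef]
    field_simp
  have hintVnn : 0 ≤ ∫ s in (0:ℝ)..t, Real.sqrt (V (x s) (u s)) :=
    intervalIntegral.integral_nonneg ht0 fun s _ => Real.sqrt_nonneg _
  have hAE : A * Real.exp (K * t) ≤ α * A' := by
    rw [hαE]
    calc A * Real.exp (K * t) ≤ A * E := mul_le_mul_of_nonneg_left hexpKt hA
      _ = α₁₂ * E * A' := by rw [hAdef]; ring
  have hmain := stepA t ⟨ht0, htT⟩
  have hlast : α₁₂ * E * C * (∫ s in (0:ℝ)..t, B s)
      = (α * L_h * c_u / (σ₁₁ * η * Real.sqrt ε)) *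
          ∫ s in (0:ℝ)..t, Real.sqrt (V (x s) (u s)) := by
    rw [hintB, ← hcoef]; ring
  have hBt : B t = (L_h / σ₁₁) * Real.sqrt (V (x t) (u t)) := rfl
  rw [hA'def] at hAE
  calc Real.sqrt (h t (x t)) ≤ A + B t + α₁₂ * W t := hmain
    _ ≤ A + B t + (A * (Real.exp (K * t) - 1) + α₁₂ * E * C * ∫ s in (0:ℝ)..t, B s) := by
        linarith
    _ = A * Real.exp (K * t) + B t + α₁₂ * E * C * ∫ s in (0:ℝ)..t, B s := by ring
    _ ≤ α * (‖u0 - ustar 0‖ + ν) + B t + α₁₂ * E * C * ∫ s in (0:ℝ)..t, B s := by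
        linarith
    _ = _ := by rw [hlast, hBt]
end

section
/- Under the hypotheses of the two preceding estimates (the bound √(h(t,x(t))) ≤ α(‖u⁰−u*(0)‖+ν) + (L_h/σ₁₁)√(V(x(t),u(t))) + (αL_h c_u/(σ₁₁η√ε))∫₀ᵗ√(V(x(s),u(s)))ds with α = α₁₂e^{α₁₂c_u√ε}, and the dissipation inequality (d/dt)V ≤ −σ₂₁V + (c_uσ₂₂/(η√ε))√(V·h(t,x(t)))), fix any σ ∈ (0,σ₂₁) and set η₁(ε) := c_u·L_h·σ₂₂/(σ₁₁·(σ₂₁−σ)·√ε). Then for any η > η₁(ε) and all t ∈ [0,ηε], (d/dt) V(x(t),u(t)) ≤ −σ·V(x(t),u(t)) + √(V(x(t),u(t)))·φ(t), where φ(t) := (α·c_u·σ₂₂/(η√ε))·(‖u⁰ − u*(0)‖ + ν + (c_u·L_h/(σ₁₁·η√ε))·∫₀ᵗ √(V(x(s),u(s))) ds). -/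
open Real MeasureTheory Set

/-- combining the output estimate with the dissipation inequality.
Given `σ ∈ (0,σ₂₁)` and `η > η₁(ε) = c_u L_h σ₂₂/(σ₁₁(σ₂₁−σ)√ε)`, for all
`t ∈ [0,ηε]` one has `(d/dt)V(x(t),u(t)) ≤ −σV + √V·φ(t)` where
`φ(t) = (αc_uσ₂₂/(η√ε))(‖u⁰−u*(0)‖+ν+(c_uL_h/(σ₁₁η√ε))∫₀ᵗ√V ds)`. -/
theorem dissipation_with_phi
    (nx nu : ℕ) (σ σ₁₁ σ₂₁ σ₂₂ L_h α₁₂ γ η ε ν c_u α η₁ : ℝ)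
    (hσ₁₁ : 0 < σ₁₁) (hσ₂₁ : 0 < σ₂₁) (hσ₂₂ : 0 < σ₂₂) (hLh : 0 < L_h)
    (hα₁₂ : 0 < α₁₂) (hγ : 0 < γ) (hη : 0 < η) (hε : 0 < ε) (hν : 0 ≤ ν)
    (hσpos : 0 < σ) (hσlt : σ < σ₂₁)
    (hcu : c_u = γ * Real.sqrt (2 * π * nu * (nu + 1)))
    (hα : α = α₁₂ * Real.exp (α₁₂ * c_u * Real.sqrt ε))
    (hη₁ : η₁ = c_u * L_h * σ₂₂ / (σ₁₁ * (σ₂₁ - σ) * Real.sqrt ε))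
    (hηgt : η₁ < η)
    (h : ℝ → EuclideanSpace ℝ (Fin nx) → ℝ)
    (V : EuclideanSpace ℝ (Fin nx) → EuclideanSpace ℝ (Fin nu) → ℝ)
    (ustar : ℝ → EuclideanSpace ℝ (Fin nu))
    (x : ℝ → EuclideanSpace ℝ (Fin nx)) (u : ℝ → EuclideanSpace ℝ (Fin nu))
    (u0 : EuclideanSpace ℝ (Fin nu)) (hu0 : u 0 = u0)
    (hhnn : ∀ t x', 0 ≤ h t x') (hVnn : ∀ y v, 0 ≤ V y v)
    -- the output estimate of the preceding step
    (hb : ∀ t ∈ Set.Icc (0:ℝ) (η * ε),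
      Real.sqrt (h t (x t)) ≤ α * (‖u0 - ustar 0‖ + ν)
        + (L_h / σ₁₁) * Real.sqrt (V (x t) (u t))
        + (α * L_h * c_u / (σ₁₁ * η * Real.sqrt ε)) *
            ∫ s in (0:ℝ)..t, Real.sqrt (V (x s) (u s)))
    -- the dissipation inequality of the preceding step
    (hd : ∀ t ∈ Set.Icc (0:ℝ) (η * ε),
      deriv (fun s => V (x s) (u s)) t ≤ -σ₂₁ * V (x t) (u t)
        + c_u * σ₂₂ / (η * Real.sqrt ε) * Real.sqrt (V (x t) (u t) * h t (x t))) :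
    ∀ t ∈ Set.Icc (0:ℝ) (η * ε),
      deriv (fun s => V (x s) (u s)) t ≤ -σ * V (x t) (u t)
        + Real.sqrt (V (x t) (u t)) *
          (α * c_u * σ₂₂ / (η * Real.sqrt ε) *
            (‖u0 - ustar 0‖ + ν + (c_u * L_h / (σ₁₁ * η * Real.sqrt ε)) *
              ∫ s in (0:ℝ)..t, Real.sqrt (V (x s) (u s)))) := by
  intro t ht
  have hsε : 0 < Real.sqrt ε := Real.sqrt_pos.mpr hε
  have hcu0 : 0 ≤ c_u := by
    rw [hcu]; positivity
  have hVt : 0 ≤ V (x t) (u t) := hVnn _ _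
  have hsV : 0 ≤ Real.sqrt (V (x t) (u t)) := Real.sqrt_nonneg _
  have hk : 0 ≤ c_u * σ₂₂ / (η * Real.sqrt ε) := by positivity
  have h1 := hd t ht
  have h2 := hb t ht
  rw [Real.sqrt_mul hVt] at h1
  have h4 : c_u * σ₂₂ / (η * Real.sqrt ε) * (Real.sqrt (V (x t) (u t)) * Real.sqrt (h t (x t)))
      ≤ c_u * σ₂₂ / (η * Real.sqrt ε) * (Real.sqrt (V (x t) (u t)) *
        (α * (‖u0 - ustar 0‖ + ν) + (L_h / σ₁₁) * Real.sqrt (V (x t) (u t))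
          + (α * L_h * c_u / (σ₁₁ * η * Real.sqrt ε)) *
            ∫ s in (0:ℝ)..t, Real.sqrt (V (x s) (u s)))) :=
    mul_le_mul_of_nonneg_left (mul_le_mul_of_nonneg_left h2 hsV) hk
  have hvv : Real.sqrt (V (x t) (u t)) * Real.sqrt (V (x t) (u t)) = V (x t) (u t) :=
    Real.mul_self_sqrt hVt
  have h5 : c_u * σ₂₂ / (η * Real.sqrt ε) * (Real.sqrt (V (x t) (u t)) *
        (α * (‖u0 - ustar 0‖ + ν) + (L_h / σ₁₁) * Real.sqrt (V (x t) (u t))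
          + (α * L_h * c_u / (σ₁₁ * η * Real.sqrt ε)) *
            ∫ s in (0:ℝ)..t, Real.sqrt (V (x s) (u s))))
      = Real.sqrt (V (x t) (u t)) *
          (α * c_u * σ₂₂ / (η * Real.sqrt ε) *
            (‖u0 - ustar 0‖ + ν + (c_u * L_h / (σ₁₁ * η * Real.sqrt ε)) *
              ∫ s in (0:ℝ)..t, Real.sqrt (V (x s) (u s))))
        + c_u * σ₂₂ / (η * Real.sqrt ε) * (L_h / σ₁₁) *
          (Real.sqrt (V (x t) (u t)) * Real.sqrt (V (x t) (u t))) := by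
    ring
  rw [hvv] at h5
  have hlt : c_u * L_h * σ₂₂ < η * (σ₁₁ * (σ₂₁ - σ) * Real.sqrt ε) := by
    rw [hη₁] at hηgt
    have hσd : 0 < σ₂₁ - σ := by linarith
    exact (div_lt_iff₀ (by positivity)).mp hηgt
  have hcoef : c_u * σ₂₂ / (η * Real.sqrt ε) * (L_h / σ₁₁) ≤ σ₂₁ - σ := by
    rw [div_mul_div_comm, div_le_iff₀ (by positivity)]
    nlinarith
  have h6 : c_u * σ₂₂ / (η * Real.sqrt ε) * (L_h / σ₁₁) * V (x t) (u t)
      ≤ (σ₂₁ - σ) * V (x t) (u t) := mul_le_mul_of_nonneg_right hcoef hVt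
  linarith
end
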